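/- Suppose gcd(m/i, n/j) = t and ν has a generating sequence Q_0 = X, Q_1 = Y, Q_2, … in which every Q_l is an eigenfunction for H_{i,j,t,x}. Let ν̄ be the restriction of ν to the quotient field Q(A_{i,j,t,x}) of A_{i,j,t,x}. Then ν̄ does not split in R_𝔪: ν is the unique valuation of K(X,Y) extending ν̄. -/
import Mathlib


open MvPolynomial Finset Pointwise

noncomputable section

namespace DuttaPaper

/-- The polynomial ring `K[X,Y]`, with `X = X 0` and `Y = X 1`. -/
abbrev Poly (K : Type) [Field K] : Type := MvPolynomial (Fin 2) K

/-- The rational function field `K(X,Y)`. -/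
abbrev RF (K : Type) [Field K] : Type := FractionRing (Poly K)

variable {K : Type} [Field K]

/-- The `K`-algebra endomorphism of `K[X,Y]` sending `X ↦ u • X`, `Y ↦ v • Y`;
this is the action of `(u,v) ∈ 𝕌_m × 𝕌_n` on `K[X,Y]`. -/
def act (u v : K) : Poly K →ₐ[K] Poly K :=
  MvPolynomial.aeval ![MvPolynomial.C u * MvPolynomial.X 0,
    MvPolynomial.C v * MvPolynomial.X 1]

/-- Membership in the set `H_{i,j,t,x} = {(α^{a i}, β^{b j}) : b ≡ a x (mod t)} ⊆ K × K`. -/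
def Hmem (α β : K) (i j t x : ℕ) (p : K × K) : Prop :=
  ∃ a b : ℤ, b ≡ a * (x : ℤ) [ZMOD (t : ℤ)] ∧
    p = (α ^ (a * (i : ℤ)), β ^ (b * (j : ℤ)))

/-- `f ∈ K[X,Y]` is an eigenfunction for `H_{i,j,t,x}`. -/
def IsEigen (α β : K) (i j t x : ℕ) (f : Poly K) : Prop :=
  ∀ p : K × K, Hmem α β i j t x p → ∃ lam : K, act p.1 p.2 f = lam • f

/-- `f ∈ K[X,Y]` belongs to the invariant ring `A_{i,j,t,x} = K[X,Y]^{H_{i,j,t,x}}`. -/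
def Invariant (α β : K) (i j t x : ℕ) (f : Poly K) : Prop :=
  ∀ p : K × K, Hmem α β i j t x p → act p.1 p.2 f = f

/-- A `ℚ`-valued (rational rank 1) valuation on a field `L`: the data of the values of the
nonzero elements (the value of `0` is irrelevant). -/
structure RatVal (L : Type) [Field L] where
  v : L → ℚ
  v_mul : ∀ a b : L, a ≠ 0 → b ≠ 0 → v (a * b) = v a + v b
  v_add : ∀ a b : L, a ≠ 0 → b ≠ 0 → a + b ≠ 0 → min (v a) (v b) ≤ v (a + b)

/-- Value of a polynomial under a valuation of `K(X,Y)`. -/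
def vP (ν : RatVal (RF K)) (f : Poly K) : ℚ :=
  ν.v (algebraMap (Poly K) (RF K) f)

/-- `ν` dominates `R_𝔪 = K[X,Y]_{(X,Y)}` : `ν ≥ 0` on `R_𝔪` and `ν > 0` on its maximal
ideal (expressed on the level of polynomials). -/
def DominatesRm (ν : RatVal (RF K)) : Prop :=
  (∀ f : Poly K, f ≠ 0 → 0 ≤ vP ν f) ∧
  (∀ f : Poly K, f ≠ 0 → MvPolynomial.constantCoeff f = 0 → 0 < vP ν f)

/-- `ν` is non-discrete: its value group is not a cyclic subgroup of `ℚ`. -/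
def Nondiscrete (ν : RatVal (RF K)) : Prop :=
  ¬ ∃ g : ℚ, ∀ z : RF K, z ≠ 0 → ∃ k : ℤ, ν.v z = (k : ℚ) * g

/-- Data of a candidate generating sequence: the polynomials `Q_l` and the numbers `m̄_l`. -/
structure GSData (K : Type) [Field K] where
  Q : ℕ → Poly K
  mbar : ℕ → ℕ

/-- `γ_l = ν(Q_l)`. -/
def GSData.γ (G : GSData K) (ν : RatVal (RF K)) (l : ℕ) : ℚ := vP ν (G.Q l)

/-- `d(l) = m̄_1 ⋯ m̄_{l-1}` (so `d(1) = 1`). -/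
def GSData.d (G : GSData K) (l : ℕ) : ℕ := ∏ k ∈ Finset.Icc 1 (l - 1), G.mbar k

/-- An exponent vector `e` is admissible when `e k < m̄_k` for all `k ≥ 1`. -/
def Adm (G : GSData K) (e : ℕ →₀ ℕ) : Prop := ∀ k, 1 ≤ k → e k < G.mbar k

/-- The monomial `X^{e 0} Q_1^{e 1} Q_2^{e 2} ⋯` in the generating sequence. -/
def Pmon (G : GSData K) (e : ℕ →₀ ℕ) : Poly K := e.prod fun k a => G.Q k ^ a

/-- The value `Σ_k e k • γ_k` of such a monomial. -/
def evalγ (ν : RatVal (RF K)) (G : GSData K) (e : ℕ →₀ ℕ) : ℚ :=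
  e.sum fun k a => (a : ℚ) * G.γ ν k

/-- `(Q_l)_{l≥0}` is a generating sequence for `ν` in `K[X,Y]` (properties (1)–(4) of
Section 2 of the paper, for the algorithm of Cutkosky–Vinh). -/
structure IsGenSeq (ν : RatVal (RF K)) (G : GSData K) : Prop where
  hQ0 : G.Q 0 = MvPolynomial.X 0
  hQ1 : G.Q 1 = MvPolynomial.X 1
  /-- `m̄_l ≥ 1`. -/
  hmbar_pos : ∀ l, 1 ≤ l → 0 < G.mbar l
  /-- `m̄_l γ_l ∈ G(γ_0, …, γ_{l-1})`. -/
  hmbar_mem : ∀ l, 1 ≤ l → ∃ c : ℕ → ℤ,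
      (G.mbar l : ℚ) * G.γ ν l = ∑ k ∈ Finset.range l, (c k : ℚ) * G.γ ν k
  /-- `m̄_l` is minimal with this property. -/
  hmbar_min : ∀ l, 1 ≤ l → ∀ q : ℕ, 0 < q →
      (∃ c : ℕ → ℤ, (q : ℚ) * G.γ ν l = ∑ k ∈ Finset.range l, (c k : ℚ) * G.γ ν k) →
      G.mbar l ≤ q
  /-- (1) `γ_{l+1} > m̄_l γ_l`. -/
  hgrowth : ∀ l, 1 ≤ l → (G.mbar l : ℚ) * G.γ ν l < G.γ ν (l + 1)
  /-- (2) `Q_l = Y^{d(l)} + (terms of lower Y-degree)`. -/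
  hmonic : ∀ l, 1 ≤ l →
      G.Q l - MvPolynomial.X 1 ^ G.d l = 0 ∨
      MvPolynomial.degreeOf 1 (G.Q l - MvPolynomial.X 1 ^ G.d l) < G.d l
  /-- (3), existence and uniqueness of the expansion of any nonzero `f` in terms of the
  admissible monomials `X^{e 0} Q_1^{e 1} ⋯ Q_r^{e r}`, `e k < m̄_k` for `k ≥ 1`. -/
  hexpand : ∀ f : Poly K, f ≠ 0 →
      ∃! c : (ℕ →₀ ℕ) →₀ K,
        (∀ e ∈ c.support, Adm G e) ∧
        f = c.sum fun e a => MvPolynomial.C a * Pmon G e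
  /-- (3), the nonzero terms of the expansion have pairwise distinct values and
  `ν(f)` is the minimum of those values. -/
  hval : ∀ f : Poly K, f ≠ 0 → ∀ c : (ℕ →₀ ℕ) →₀ K,
      (∀ e ∈ c.support, Adm G e) →
      f = (c.sum fun e a => MvPolynomial.C a * Pmon G e) →
      (∀ e ∈ c.support, ∀ e' ∈ c.support, evalγ ν G e = evalγ ν G e' → e = e') ∧
      ∃ e₀ ∈ c.support, vP ν f = evalγ ν G e₀ ∧
        ∀ e ∈ c.support, evalγ ν G e₀ ≤ evalγ ν G e
  /-- (4) `Q_{l+1} = Q_l^{m̄_l} - λ_l X^{c_0} Y^{c_1} Q_2^{c_2} ⋯ Q_{l-1}^{c_{l-1}}` with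
  `0 ≤ c_k < m̄_k` for `k ≥ 1` and `m̄_l γ_l = Σ_{k<l} c_k γ_k`. -/
  hrec : ∀ l, 1 ≤ l → ∃ lam : K, lam ≠ 0 ∧ ∃ cc : ℕ → ℕ,
      (∀ k, 1 ≤ k → k < l → cc k < G.mbar k) ∧
      G.Q (l + 1) =
        G.Q l ^ G.mbar l - MvPolynomial.C lam * ∏ k ∈ Finset.range l, G.Q k ^ cc k ∧
      (G.mbar l : ℚ) * G.γ ν l = ∑ k ∈ Finset.range l, (cc k : ℚ) * G.γ ν k

/-- The valuation semigroup `S^{R_𝔪}(ν) = {ν(h) : 0 ≠ h ∈ R_𝔪}`. -/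
def SRm (ν : RatVal (RF K)) : Set ℚ :=
  {q | ∃ f g : Poly K, f ≠ 0 ∧ MvPolynomial.constantCoeff g ≠ 0 ∧
    q = vP ν f - vP ν g}

/-- The valuation semigroup `S^{(A_{i,j,t,x})_𝔫}(ν)` of the invariant ring localized at
`𝔫 = (X,Y) ∩ A_{i,j,t,x}`. -/
def SA (ν : RatVal (RF K)) (α β : K) (i j t x : ℕ) : Set ℚ :=
  {q | ∃ f g : Poly K, f ≠ 0 ∧ Invariant α β i j t x f ∧ Invariant α β i j t x g ∧
    MvPolynomial.constantCoeff g ≠ 0 ∧ q = vP ν f - vP ν g}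

/-- `S` is a finitely generated module over the subsemigroup `T`:
`S = {s_1, …, s_k} + T` for finitely many `s_i ∈ S`. -/
def FGover (S T : Set ℚ) : Prop :=
  ∃ F : Finset ℚ, (F : Set ℚ) ⊆ S ∧ S = (F : Set ℚ) + T


/-! ### Auxiliary lemmas -/

section Aux

variable {L : Type} [Field L]

lemma RatVal.v_one' (w : RatVal L) : w.v 1 = 0 := by
  have := w.v_mul 1 1 one_ne_zero one_ne_zero
  simp at this; linarith

lemma RatVal.v_neg' (w : RatVal L) (a : L) (ha : a ≠ 0) : w.v (-a) = w.v a := by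
  have h1 : w.v ((-1 : L) * (-1)) = w.v (-1) + w.v (-1) :=
    w.v_mul _ _ (by norm_num) (by norm_num)
  simp only [neg_mul, one_mul, neg_neg] at h1
  rw [RatVal.v_one' w] at h1
  have h2 : w.v (-1 : L) = 0 := by linarith
  have h3 : w.v ((-1 : L) * a) = w.v (-1) + w.v a := w.v_mul _ _ (by norm_num) ha
  rw [neg_mul, one_mul] at h3
  rw [h3, h2, zero_add]

lemma RatVal.v_pow' (w : RatVal L) (a : L) (ha : a ≠ 0) (k : ℕ) :
    w.v (a ^ k) = (k : ℚ) * w.v a := by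
  induction k with
  | zero => simp [RatVal.v_one' w]
  | succ k ih =>
    rw [pow_succ, w.v_mul _ _ (pow_ne_zero _ ha) ha, ih]
    push_cast; ring

lemma RatVal.v_prod' (w : RatVal L) {ι : Type*} (s : Finset ι) (b : ι → L)
    (h0 : ∀ i ∈ s, b i ≠ 0) : w.v (∏ i ∈ s, b i) = ∑ i ∈ s, w.v (b i) := by
  induction s using Finset.cons_induction with
  | empty => simpa using RatVal.v_one' w
  | cons a s ha ih =>
    rw [Finset.prod_cons, Finset.sum_cons,
      w.v_mul _ _ (h0 a (Finset.mem_cons_self a s))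
        (Finset.prod_ne_zero_iff.mpr fun i hi => h0 i (Finset.mem_cons_of_mem hi)),
      ih fun i hi => h0 i (Finset.mem_cons_of_mem hi)]

lemma RatVal.le_v_sum (w : RatVal L) {ι : Type*} (s : Finset ι) (g : ι → L) (q : ℚ)
    (h0 : ∀ i ∈ s, g i ≠ 0) (hq : ∀ i ∈ s, q ≤ w.v (g i)) (hs : ∑ i ∈ s, g i ≠ 0) :
    q ≤ w.v (∑ i ∈ s, g i) := by
  induction s using Finset.cons_induction with
  | empty => simp at hs
  | cons a s ha ih =>
    rw [Finset.sum_cons] at hs ⊢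
    by_cases hrest : ∑ i ∈ s, g i = 0
    · rw [hrest, add_zero]
      exact hq a (Finset.mem_cons_self a s)
    · have h1 := w.v_add (g a) _ (h0 a (Finset.mem_cons_self a s)) hrest hs
      have h2 := ih (fun i hi => h0 i (Finset.mem_cons_of_mem hi))
        (fun i hi => hq i (Finset.mem_cons_of_mem hi)) hrest
      have h3 := hq a (Finset.mem_cons_self a s)
      exact le_trans (le_min h3 h2) h1

/-- If one term has strictly minimal value, the value of the sum equals it. -/
lemma RatVal.v_sum_eq (w : RatVal L) {ι : Type*} [DecidableEq ι] (s : Finset ι) (g : ι → L)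
    (i₀ : ι) (hi₀ : i₀ ∈ s) (h0 : ∀ i ∈ s, g i ≠ 0)
    (hmin : ∀ i ∈ s, i ≠ i₀ → w.v (g i₀) < w.v (g i))
    (hs : ∑ i ∈ s, g i ≠ 0) :
    w.v (∑ i ∈ s, g i) = w.v (g i₀) := by
  classical
  have hsplit : ∑ i ∈ s, g i = g i₀ + ∑ i ∈ s.erase i₀, g i :=
    (Finset.add_sum_erase s g hi₀).symm
  by_cases hrest : ∑ i ∈ s.erase i₀, g i = 0
  · rw [hsplit, hrest, add_zero]
  · have hne : (s.erase i₀).Nonempty := by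
      rw [Finset.nonempty_iff_ne_empty]
      intro h; rw [h] at hrest; simp at hrest
    obtain ⟨i₁, hi₁, hmin₁⟩ := Finset.exists_min_image (s.erase i₀) (fun i => w.v (g i)) hne
    have hi₁s : i₁ ∈ s := Finset.mem_of_mem_erase hi₁
    have hi₁ne : i₁ ≠ i₀ := Finset.ne_of_mem_erase hi₁
    have hgt : w.v (g i₀) < w.v (g i₁) := hmin i₁ hi₁s hi₁ne
    have hrestge : w.v (g i₁) ≤ w.v (∑ i ∈ s.erase i₀, g i) :=
      RatVal.le_v_sum w _ _ _ (fun i hi => h0 i (Finset.mem_of_mem_erase hi)) hmin₁ hrest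
    have hge : w.v (g i₀) ≤ w.v (∑ i ∈ s, g i) := by
      rw [hsplit]
      have := w.v_add (g i₀) _ (h0 i₀ hi₀) hrest (hsplit ▸ hs)
      calc w.v (g i₀) ≤ min (w.v (g i₀)) (w.v (∑ i ∈ s.erase i₀, g i)) := by
            apply le_min le_rfl; linarith
        _ ≤ _ := this
    have hle : w.v (∑ i ∈ s, g i) ≤ w.v (g i₀) := by
      have heq : (∑ i ∈ s, g i) + (-(∑ i ∈ s.erase i₀, g i)) = g i₀ := by
        rw [hsplit]; ring
      have := w.v_add (∑ i ∈ s, g i) (-(∑ i ∈ s.erase i₀, g i)) hs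
        (neg_ne_zero.mpr hrest) (heq ▸ h0 i₀ hi₀)
      rw [heq, RatVal.v_neg' w _ hrest] at this
      rcases min_le_iff.mp this with h|h
      · exact h
      · linarith
    linarith [hge, hle]

end Aux

section AuxK

variable {K : Type} [Field K]

lemma act_comp (u v u' v' : K) (f : Poly K) :
    act u v (act u' v' f) = act (u * u') (v * v') f := by
  have h : (act u v).comp (act u' v') = act (u * u') (v * v') := by
    apply MvPolynomial.algHom_ext
    intro b
    fin_cases b <;>
      simp [act, mul_comm, mul_left_comm, mul_assoc]
  calc act u v (act u' v' f) = ((act u v).comp (act u' v')) f := rfl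
    _ = act (u * u') (v * v') f := by rw [h]

lemma act_one_one (f : Poly K) : act (1 : K) 1 f = f := by
  have h : act (1 : K) 1 = AlgHom.id K (Poly K) := by
    apply MvPolynomial.algHom_ext
    intro b
    fin_cases b <;> simp [act]
  rw [h]; rfl

lemma act_C (u v a : K) : act u v (MvPolynomial.C a) = MvPolynomial.C a := by
  simp [act, MvPolynomial.algebraMap_eq]

lemma invariant_C (α β : K) (i j t x : ℕ) (a : K) :
    Invariant α β i j t x (MvPolynomial.C a) := fun p _ => act_C p.1 p.2 a

/-- `H` is closed under taking powers, and eigenvalues iterate. -/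
lemma act_pow_eigen (u v lam : K) (f : Poly K) (hf : act u v f = lam • f) (k : ℕ) :
    act (u ^ k) (v ^ k) f = lam ^ k • f := by
  induction k with
  | zero => simpa using act_one_one f
  | succ k ih =>
    rw [pow_succ, pow_succ, ← act_comp, hf, map_smul, ih, smul_smul, pow_succ]
    ring_nf

/-- The `(mn)`-th power of a nonzero eigenfunction is invariant. -/
lemma eigen_pow_invariant (α β : K) (i j t x m n : ℕ) (hm : 0 < m) (hn : 0 < n)
    (hα : α ^ m = 1) (hβ : β ^ n = 1) (f : Poly K) (hf : f ≠ 0)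
    (he : IsEigen α β i j t x f) :
    Invariant α β i j t x (f ^ (m * n)) := by
  intro p hp
  obtain ⟨lam, hlam⟩ := he p hp
  obtain ⟨a, b, hab, hpe⟩ := hp
  have hαne : α ≠ 0 := by
    intro h; rw [h, zero_pow hm.ne'] at hα; exact zero_ne_one hα
  have hβne : β ≠ 0 := by
    intro h; rw [h, zero_pow hn.ne'] at hβ; exact zero_ne_one hβ
  have hp1 : p.1 ^ (m * n) = 1 := by
    rw [hpe]
    show (α ^ (a * (i : ℤ))) ^ (m * n) = 1
    rw [← zpow_natCast (α ^ (a * (i : ℤ))) (m * n), ← zpow_mul]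
    have : a * (i : ℤ) * ((m : ℤ) * n) = (m : ℤ) * (a * i * n) := by ring
    rw [Nat.cast_mul, this, zpow_mul, zpow_natCast, hα, one_zpow]
  have hp2 : p.2 ^ (m * n) = 1 := by
    rw [hpe]
    show (β ^ (b * (j : ℤ))) ^ (m * n) = 1
    rw [← zpow_natCast (β ^ (b * (j : ℤ))) (m * n), ← zpow_mul]
    have : b * (j : ℤ) * ((m : ℤ) * n) = (n : ℤ) * (b * j * m) := by ring
    rw [Nat.cast_mul, this, zpow_mul, zpow_natCast, hβ, one_zpow]
  have hiter := act_pow_eigen p.1 p.2 lam f hlam (m * n)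
  rw [hp1, hp2, act_one_one] at hiter
  have hlam1 : lam ^ (m * n) = 1 := by
    have : (1 : K) • f = lam ^ (m * n) • f := by rw [one_smul]; exact hiter
    rw [MvPolynomial.smul_eq_C_mul, MvPolynomial.smul_eq_C_mul] at this
    have := mul_right_cancel₀ hf this
    have := MvPolynomial.C_injective (Fin 2) K this
    exact this.symm
  rw [map_pow, hlam, MvPolynomial.smul_eq_C_mul, mul_pow, ← map_pow, hlam1, map_one, one_mul]

lemma Q_ne_zero {ν : RatVal (RF K)} {G : GSData K} (hG : IsGenSeq ν G) :
    ∀ l, G.Q l ≠ 0 := by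
  intro l h0
  rcases Nat.eq_zero_or_pos l with h|h
  · subst h; rw [hG.hQ0] at h0; exact MvPolynomial.X_ne_zero 0 h0
  · have hd : 0 < G.d l := by
      unfold GSData.d
      exact Finset.prod_pos fun k hk => hG.hmbar_pos k (Finset.mem_Icc.mp hk).1
    rcases hG.hmonic l h with h1|h1
    · rw [h0, zero_sub, neg_eq_zero] at h1
      exact pow_ne_zero _ (MvPolynomial.X_ne_zero 1) h1
    · rw [h0, zero_sub] at h1
      have hXd : MvPolynomial.degreeOf 1 (-(MvPolynomial.X 1 ^ G.d l) : Poly K) = G.d l := by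
        rw [MvPolynomial.degreeOf_eq_sup, MvPolynomial.support_neg,
          MvPolynomial.support_X_pow]
        simp
      omega

end AuxK

/-- the restriction `ν̄` of `ν` to the quotient field of the invariant
ring does not split: `ν` is the unique valuation of `K(X,Y)` extending `ν̄` (a
valuation agrees with `ν` on `Q(A)` iff it agrees on the nonzero invariants). -/
theorem stmt_16 (K : Type) [Field K] [IsAlgClosed K] [CharZero K]
    (m n : ℕ) (hm : 0 < m) (hn : 0 < n) (α β : K)
    (hα : IsPrimitiveRoot α m) (hβ : IsPrimitiveRoot β n)
    (i j t x : ℕ) (hi : 0 < i) (hj : 0 < j) (ht : 0 < t)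
    (him : i ∣ m) (hjn : j ∣ n) (hti : t ∣ m / i) (htj : t ∣ n / j)
    (hxt : Nat.gcd x t = 1) (hx1 : 1 ≤ x) (hxle : x ≤ t)
    (ν : RatVal (RF K)) (hdom : DominatesRm ν) (hnd : Nondiscrete ν)
    (G : GSData K) (hG : IsGenSeq ν G)
    (heig : ∀ l, IsEigen α β i j t x (G.Q l))
    (hgcd : Nat.gcd (m / i) (n / j) = t) :
    ∀ ω : RatVal (RF K),
      (∀ f : Poly K, f ≠ 0 → Invariant α β i j t x f →
        ω.v (algebraMap (Poly K) (RF K) f) = ν.v (algebraMap (Poly K) (RF K) f)) →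
      ∀ z : RF K, z ≠ 0 → ω.v z = ν.v z := by
  intro ω hω z hz
  classical
  have hinj : Function.Injective (algebraMap (Poly K) (RF K)) :=
    IsFractionRing.injective (Poly K) (RF K)
  have hφ0 : ∀ f : Poly K, f ≠ 0 → algebraMap (Poly K) (RF K) f ≠ 0 := by
    intro f hf h
    exact hf (hinj (by simpa using h))
  have hQne : ∀ l, G.Q l ≠ 0 := Q_ne_zero hG
  have hmn : 0 < m * n := Nat.mul_pos hm hn
  -- ω agrees with ν on the Q_l
  have hQval : ∀ l, ω.v (algebraMap (Poly K) (RF K) (G.Q l)) =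
      ν.v (algebraMap (Poly K) (RF K) (G.Q l)) := by
    intro l
    have hinv : Invariant α β i j t x (G.Q l ^ (m * n)) :=
      eigen_pow_invariant α β i j t x m n hm hn hα.pow_eq_one hβ.pow_eq_one
        (G.Q l) (hQne l) (heig l)
    have h1 := hω (G.Q l ^ (m * n)) (pow_ne_zero _ (hQne l)) hinv
    rw [map_pow, RatVal.v_pow' ω _ (hφ0 _ (hQne l)), RatVal.v_pow' ν _ (hφ0 _ (hQne l))] at h1
    have hmn' : ((m * n : ℕ) : ℚ) ≠ 0 := by positivity
    exact mul_left_cancel₀ hmn' h1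
  -- ν vanishes on nonzero constants
  have hCν : ∀ a : K, a ≠ 0 → ν.v (algebraMap (Poly K) (RF K) (MvPolynomial.C a)) = 0 := by
    intro a ha
    have hCne : (MvPolynomial.C a : Poly K) ≠ 0 := fun h =>
      ha (by simpa using MvPolynomial.C_injective (Fin 2) K (h.trans (map_zero _).symm))
    have hCne' : (MvPolynomial.C a⁻¹ : Poly K) ≠ 0 := fun h =>
      inv_ne_zero ha (by simpa using MvPolynomial.C_injective (Fin 2) K (h.trans (map_zero _).symm))
    have h1 : 0 ≤ ν.v (algebraMap (Poly K) (RF K) (MvPolynomial.C a)) :=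
      hdom.1 _ hCne
    have h2 : 0 ≤ ν.v (algebraMap (Poly K) (RF K) (MvPolynomial.C a⁻¹)) :=
      hdom.1 _ hCne'
    have h3 : (MvPolynomial.C a : Poly K) * MvPolynomial.C a⁻¹ = 1 := by
      rw [← map_mul, mul_inv_cancel₀ ha, map_one]
    have h4 := ν.v_mul (algebraMap (Poly K) (RF K) (MvPolynomial.C a))
      (algebraMap (Poly K) (RF K) (MvPolynomial.C a⁻¹)) (hφ0 _ hCne) (hφ0 _ hCne')
    rw [← map_mul, h3, map_one, RatVal.v_one' ν] at h4
    linarith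
  -- ω also vanishes on nonzero constants
  have hCω : ∀ a : K, a ≠ 0 → ω.v (algebraMap (Poly K) (RF K) (MvPolynomial.C a)) = 0 := by
    intro a ha
    have hCne : (MvPolynomial.C a : Poly K) ≠ 0 := fun h =>
      ha (by simpa using MvPolynomial.C_injective (Fin 2) K (h.trans (map_zero _).symm))
    rw [hω _ hCne (invariant_C α β i j t x a)]
    exact hCν a ha
  -- monomials in the generating sequence are nonzero
  have hPne : ∀ e : ℕ →₀ ℕ, Pmon G e ≠ 0 := by
    intro e
    unfold Pmon
    rw [Finsupp.prod]
    exact Finset.prod_ne_zero_iff.mpr fun k _ => pow_ne_zero _ (hQne k)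
  -- value of a generating-sequence monomial under ω and ν
  have hPw : ∀ (w : RatVal (RF K)),
      (∀ l, w.v (algebraMap (Poly K) (RF K) (G.Q l)) =
        ν.v (algebraMap (Poly K) (RF K) (G.Q l))) →
      ∀ e : ℕ →₀ ℕ, w.v (algebraMap (Poly K) (RF K) (Pmon G e)) = evalγ ν G e := by
    intro w hw e
    unfold Pmon evalγ
    rw [Finsupp.prod, Finsupp.sum, map_prod,
      RatVal.v_prod' w _ _ (fun k _ => hφ0 _ (pow_ne_zero _ (hQne k)))]
    apply Finset.sum_congr rfl
    intro k _
    rw [map_pow, RatVal.v_pow' w _ (hφ0 _ (hQne k)), hw k]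
    rfl
  -- ω agrees with ν on all nonzero polynomials
  have hpoly : ∀ f : Poly K, f ≠ 0 →
      ω.v (algebraMap (Poly K) (RF K) f) = ν.v (algebraMap (Poly K) (RF K) f) := by
    intro f hf
    obtain ⟨c, ⟨hadm, hsum⟩, -⟩ := hG.hexpand f hf
    obtain ⟨hdist, e₀, he₀, hνf, hmin⟩ := hG.hval f hf c hadm hsum
    have hcne : ∀ e ∈ c.support, (MvPolynomial.C (c e) : Poly K) * Pmon G e ≠ 0 := by
      intro e he
      refine mul_ne_zero (fun h => ?_) (hPne e)
      exact Finsupp.mem_support_iff.mp he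
        (by simpa using MvPolynomial.C_injective (Fin 2) K (h.trans (map_zero _).symm))
    have hrepr : algebraMap (Poly K) (RF K) f =
        ∑ e ∈ c.support, algebraMap (Poly K) (RF K) (MvPolynomial.C (c e) * Pmon G e) := by
      conv_lhs => rw [hsum]
      rw [Finsupp.sum, map_sum]
    have hterm : ∀ e ∈ c.support,
        ω.v (algebraMap (Poly K) (RF K) (MvPolynomial.C (c e) * Pmon G e)) = evalγ ν G e := by
      intro e he
      have hce : c e ≠ 0 := Finsupp.mem_support_iff.mp he
      have hCne : (MvPolynomial.C (c e) : Poly K) ≠ 0 := fun h =>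
        hce (by simpa using MvPolynomial.C_injective (Fin 2) K (h.trans (map_zero _).symm))
      rw [map_mul, ω.v_mul _ _ (hφ0 _ hCne) (hφ0 _ (hPne e)), hCω _ hce, hPw ω hQval e,
        zero_add]
    have hsum_ne : (∑ e ∈ c.support,
        algebraMap (Poly K) (RF K) (MvPolynomial.C (c e) * Pmon G e)) ≠ 0 := by
      rw [← hrepr]; exact hφ0 f hf
    have hstrict : ∀ e ∈ c.support, e ≠ e₀ →
        ω.v (algebraMap (Poly K) (RF K) (MvPolynomial.C (c e₀) * Pmon G e₀)) <
        ω.v (algebraMap (Poly K) (RF K) (MvPolynomial.C (c e) * Pmon G e)) := by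
      intro e he hne
      rw [hterm e he, hterm e₀ he₀]
      rcases lt_or_eq_of_le (hmin e he) with h|h
      · exact h
      · exact absurd (hdist e he e₀ he₀ h.symm) hne
    have hωf : ω.v (algebraMap (Poly K) (RF K) f) = evalγ ν G e₀ := by
      rw [hrepr,
        RatVal.v_sum_eq ω c.support _ e₀ he₀ (fun e he => hφ0 _ (hcne e he)) hstrict hsum_ne,
        hterm e₀ he₀]
    rw [hωf, ← hνf]
    rfl
  -- conclude for arbitrary nonzero z
  obtain ⟨f, g, hg, hzeq⟩ := IsFractionRing.div_surjective (A := Poly K) z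
  have hgne : g ≠ 0 := nonZeroDivisors.ne_zero hg
  have hφg : algebraMap (Poly K) (RF K) g ≠ 0 := hφ0 g hgne
  have hzg : z * algebraMap (Poly K) (RF K) g = algebraMap (Poly K) (RF K) f := by
    rw [← hzeq]; field_simp
  have hφf : algebraMap (Poly K) (RF K) f ≠ 0 := by
    rw [← hzg]; exact mul_ne_zero hz hφg
  have hfne : f ≠ 0 := fun h => hφf (by rw [h, map_zero])
  have h1 : ω.v (algebraMap (Poly K) (RF K) f) = ω.v z + ω.v (algebraMap (Poly K) (RF K) g) := by
    rw [← hzg]; exact ω.v_mul z _ hz hφg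
  have h2 : ν.v (algebraMap (Poly K) (RF K) f) = ν.v z + ν.v (algebraMap (Poly K) (RF K) g) := by
    rw [← hzg]; exact ν.v_mul z _ hz hφg
  have h3 := hpoly f hfne
  have h4 := hpoly g hgne
  linarith

end DuttaPaper
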